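/- For every real x > 1, the cross-polytope C'_x = conv({−x e_i, x e_i : 1 ≤ i < n} ∪ {−e_n, e_n}) ⊆ ℝ^n satisfies g(C'_x) = 2 and h(C'_x) = n. -/

import Mathlib

open scoped BigOperators
open Pointwise Metric

noncomputable section

/-- `ℝ^n` with the Euclidean structure. -/
abbrev Euc (n : ℕ) := EuclideanSpace ℝ (Fin n)

/-- A point of `ℝ^n` is a lattice point if all its coordinates are integers. -/
def IsLatticePoint {n : ℕ} (x : Euc n) : Prop := ∀ i, ∃ m : ℤ, x i = (m : ℝ)

/-- A compact convex body, symmetric about the origin, with nonempty interior. -/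
def IsSymmConvexBody {n : ℕ} (C : Set (Euc n)) : Prop :=
  IsCompact C ∧ Convex ℝ C ∧ (∀ x ∈ C, -x ∈ C) ∧ (interior C).Nonempty

/-- `IsSuccMin C i l` means `l` is the `i`-th successive minimum of `C` w.r.t. `ℤ^n`:
the least `t > 0` such that `t • C` contains `i` linearly independent lattice points. -/
def IsSuccMin {n : ℕ} (C : Set (Euc n)) (i : ℕ) (l : ℝ) : Prop :=
  IsLeast {t : ℝ | 0 < t ∧ ∃ v : Fin i → Euc n, LinearIndependent ℝ v ∧
    ∀ j, IsLatticePoint (v j) ∧ v j ∈ t • C} l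

/-- A finite set of points in `ℝ^n` is in general position if no `n` of its elements
are linearly dependent. -/
def InGenPos {n : ℕ} (S : Finset (Euc n)) : Prop :=
  ∀ T ⊆ S, T.card = n →
    LinearIndependent ℝ (fun x : (T : Set (Euc n)) => (x : Euc n))

/-- `h(C)`: the maximum cardinality of a subset of `C ∩ ℤ^n` in general position. -/
def maxGenPos {n : ℕ} (C : Set (Euc n)) : ℕ :=
  sSup {k : ℕ | ∃ S : Finset (Euc n), S.card = k ∧ ↑S ⊆ C ∧
    (∀ x ∈ S, IsLatticePoint x) ∧ InGenPos S}

/-- `g(C)`: the minimum number of proper linear subspaces covering `C ∩ ℤ^n`. -/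
def coverNum {n : ℕ} (C : Set (Euc n)) : ℕ :=
  sInf {k : ℕ | ∃ F : Finset (Submodule ℝ (Euc n)), F.card = k ∧
    (∀ H ∈ F, H ≠ ⊤) ∧ ∀ x ∈ C, IsLatticePoint x → ∃ H ∈ F, x ∈ H}

/-- The cross-polytope `C'_x = conv({±x·e_i : 1 ≤ i < n} ∪ {±e_n}) ⊆ ℝ^n`. -/
def crossBody (n : ℕ) (x : ℝ) : Set (Euc n) :=
  convexHull ℝ {p : Euc n | ∃ i : Fin n,
    ((i : ℕ) < n - 1 ∧ (p = x • EuclideanSpace.single i (1 : ℝ) ∨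
                        p = -(x • EuclideanSpace.single i (1 : ℝ)))) ∨
    ((i : ℕ) = n - 1 ∧ (p = EuclideanSpace.single i (1 : ℝ) ∨
                        p = -EuclideanSpace.single i (1 : ℝ)))}

lemma cross_sum_le {n : ℕ} {x : ℝ} (hx : 1 < x) {p : Euc n}
    (hp : p ∈ crossBody n x) :
    ∑ i : Fin n, (if (i : ℕ) = n - 1 then 1 else 1/x) * |p i| ≤ 1 := by
  have hx0 : (0:ℝ) < x := lt_trans one_pos hx
  set w : Fin n → ℝ := fun i => if (i : ℕ) = n - 1 then 1 else 1/x with hw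
  have hwpos : ∀ i, 0 < w i := by
    intro i; by_cases h : (i : ℕ) = n - 1 <;> simp [hw, h] <;> positivity
  set B : Set (Euc n) := {q : Euc n | ∑ i, w i * |q i| ≤ 1} with hB
  have hsingle : ∀ (i : Fin n) (c : ℝ), w i * |c| ≤ 1 →
      (c • EuclideanSpace.single i (1:ℝ)) ∈ B := by
    intro i c hc
    have : ∀ j, |(c • EuclideanSpace.single i (1:ℝ)) j| = if j = i then |c| else 0 := by
      intro j
      by_cases h : j = i <;>
        simp [PiLp.smul_apply, EuclideanSpace.single_apply, h, abs_mul]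
    simp only [hB, Set.mem_setOf_eq]
    calc ∑ j, w j * |(c • EuclideanSpace.single i (1:ℝ)) j|
        = ∑ j, (if j = i then w i * |c| else 0) := by
          apply Finset.sum_congr rfl; intro j _
          rw [this j]; by_cases h : j = i <;> simp [h]
      _ = w i * |c| := by simp
      _ ≤ 1 := hc
  have hBneg : ∀ q ∈ B, -q ∈ B := by
    intro q hq
    simp only [hB, Set.mem_setOf_eq] at hq ⊢
    simpa using hq
  have hconv : Convex ℝ B := by
    intro p hp q hq a b ha hb hab
    simp only [hB, Set.mem_setOf_eq] at hp hq ⊢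
    calc ∑ j, w j * |(a • p + b • q) j|
        ≤ ∑ j, (a * (w j * |p j|) + b * (w j * |q j|)) := by
          apply Finset.sum_le_sum; intro j _
          have h1 : |(a • p + b • q) j| = |a * p j + b * q j| := by
            simp [PiLp.add_apply, PiLp.smul_apply]
          have h2 : |a * p j + b * q j| ≤ a * |p j| + b * |q j| := by
            calc |a * p j + b * q j| ≤ |a * p j| + |b * q j| := abs_add_le _ _
              _ = a * |p j| + b * |q j| := by rw [abs_mul, abs_mul, abs_of_nonneg ha, abs_of_nonneg hb]
          rw [h1]
          nlinarith [(hwpos j).le, abs_nonneg (p j), abs_nonneg (q j), h2]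
      _ = a * (∑ j, w j * |p j|) + b * (∑ j, w j * |q j|) := by
          rw [Finset.sum_add_distrib, Finset.mul_sum, Finset.mul_sum]
      _ ≤ a * 1 + b * 1 := by
          apply add_le_add <;> apply mul_le_mul_of_nonneg_left <;> assumption
      _ = 1 := by linarith
  have hgen : {p : Euc n | ∃ i : Fin n,
      ((i : ℕ) < n - 1 ∧ (p = x • EuclideanSpace.single i (1 : ℝ) ∨
                          p = -(x • EuclideanSpace.single i (1 : ℝ)))) ∨
      ((i : ℕ) = n - 1 ∧ (p = EuclideanSpace.single i (1 : ℝ) ∨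
                          p = -EuclideanSpace.single i (1 : ℝ)))} ⊆ B := by
    rintro p ⟨i, ⟨hi, hp | hp⟩ | ⟨hi, hp | hp⟩⟩ <;> subst hp
    · exact hsingle i x (by simp [hw, Nat.ne_of_lt hi, abs_of_pos hx0, div_mul_cancel₀,
        ne_of_gt hx0])
    · exact hBneg _ (hsingle i x (by simp [hw, Nat.ne_of_lt hi, abs_of_pos hx0, ne_of_gt hx0]))
    · have := hsingle i 1 (by simp [hw, hi])
      simpa using this
    · have := hBneg _ (hsingle i 1 (by simp [hw, hi]))
      simpa using this
  exact convexHull_min hgen hconv hp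

lemma zero_mem_cross {n : ℕ} (hn : 2 ≤ n) {x : ℝ} : (0 : Euc n) ∈ crossBody n x := by
  have hL : n - 1 < n := by omega
  set L : Fin n := ⟨n - 1, hL⟩ with hLdef
  have hv : (EuclideanSpace.single L (1:ℝ)) ∈ crossBody n x :=
    subset_convexHull ℝ _ ⟨L, Or.inr ⟨rfl, Or.inl rfl⟩⟩
  have hnv : (-EuclideanSpace.single L (1:ℝ)) ∈ crossBody n x :=
    subset_convexHull ℝ _ ⟨L, Or.inr ⟨rfl, Or.inr rfl⟩⟩
  have := (convex_convexHull ℝ _) hv hnv (by norm_num : (0:ℝ) ≤ 1/2)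
    (by norm_num : (0:ℝ) ≤ 1/2) (by norm_num)
  simpa [smul_neg, crossBody] using this

lemma single_mem_cross {n : ℕ} (hn : 2 ≤ n) {x : ℝ} (hx : 1 < x) (i : Fin n) :
    EuclideanSpace.single i (1:ℝ) ∈ crossBody n x := by
  have hx0 : (0:ℝ) < x := lt_trans one_pos hx
  by_cases hi : (i : ℕ) = n - 1
  · exact subset_convexHull ℝ _ ⟨i, Or.inr ⟨hi, Or.inl rfl⟩⟩
  · have hi' : (i : ℕ) < n - 1 := by omega
    have hv : (x • EuclideanSpace.single i (1:ℝ)) ∈ crossBody n x :=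
      subset_convexHull ℝ _ ⟨i, Or.inl ⟨hi', Or.inl rfl⟩⟩
    have h0 : (0 : Euc n) ∈ crossBody n x := zero_mem_cross hn
    have := (convex_convexHull ℝ _) hv h0 (a := 1/x) (b := 1 - 1/x)
      (le_of_lt (by positivity : (0:ℝ) < 1/x))
      (by rw [sub_nonneg]; exact (div_le_one hx0).mpr hx.le) (by ring)
    simpa [smul_smul, one_div, inv_mul_cancel₀ (ne_of_gt hx0), crossBody] using this

lemma lattice_single {n : ℕ} (i : Fin n) :
    IsLatticePoint (EuclideanSpace.single i (1:ℝ)) := by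
  intro j
  by_cases h : j = i
  · exact ⟨1, by simp [EuclideanSpace.single_apply, h]⟩
  · exact ⟨0, by simp [EuclideanSpace.single_apply, h]⟩

lemma classify_cross {n : ℕ} (hn : 2 ≤ n) {x : ℝ} (hx : 1 < x) {p : Euc n}
    (hp : p ∈ crossBody n x) (hlat : IsLatticePoint p) :
    p ⟨n-1, by omega⟩ = 0 ∨ p = EuclideanSpace.single (⟨n-1, by omega⟩ : Fin n) (1:ℝ) ∨
      p = -EuclideanSpace.single (⟨n-1, by omega⟩ : Fin n) (1:ℝ) := by
  have hx0 : (0:ℝ) < x := lt_trans one_pos hx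
  set L : Fin n := ⟨n-1, by omega⟩ with hLdef
  set w : Fin n → ℝ := fun i => if (i : ℕ) = n - 1 then 1 else 1/x with hw
  have hwnn : ∀ i, 0 ≤ w i := by
    intro i; by_cases h : (i : ℕ) = n - 1 <;> simp [hw, h] <;> positivity
  have key : ∑ i, w i * |p i| ≤ 1 := cross_sum_le hx hp
  by_cases hL0 : p L = 0
  · exact Or.inl hL0
  · right
    obtain ⟨m, hm⟩ := hlat L
    have hm0 : m ≠ 0 := by rintro rfl; exact hL0 (by simp [hm])
    have habs : (1:ℝ) ≤ |p L| := by
      rw [hm, ← Int.cast_abs]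
      exact_mod_cast Int.one_le_abs hm0
    -- all other coordinates vanish
    have hother : ∀ j, j ≠ L → p j = 0 := by
      intro j hj
      have hsub : ({j, L} : Finset (Fin n)) ⊆ Finset.univ := Finset.subset_univ _
      have hle : w j * |p j| + w L * |p L| ≤ ∑ i, w i * |p i| := by
        have := Finset.sum_le_sum_of_subset_of_nonneg (f := fun i => w i * |p i|) hsub
          (fun i _ _ => mul_nonneg (hwnn i) (abs_nonneg _))
        rwa [Finset.sum_pair hj] at this
      have hwL : w L = 1 := by simp [hw, hLdef]
      have hwj : w j = 1/x := by
        have : (j : ℕ) ≠ n - 1 := by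
          intro h; exact hj (Fin.ext (by simp [h, hLdef]))
        simp [hw, this]
      have : (1/x) * |p j| ≤ 0 := by
        rw [hwj] at hle; rw [hwL] at hle; nlinarith
      have h0 : |p j| ≤ 0 := by
        have hxpos : (0:ℝ) < 1/x := by positivity
        nlinarith [abs_nonneg (p j)]
      exact abs_eq_zero.mp (le_antisymm h0 (abs_nonneg _))
    have hle1 : |p L| ≤ 1 := by
      have hsingle : w L * |p L| ≤ ∑ i, w i * |p i| :=
        Finset.single_le_sum (fun i _ => mul_nonneg (hwnn i) (abs_nonneg _))
          (Finset.mem_univ L)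
      have hwL : w L = 1 := by simp [hw, hLdef]
      rw [hwL, one_mul] at hsingle; linarith
    have habs1 : |p L| = 1 := le_antisymm hle1 habs
    rcases abs_eq (by norm_num : (0:ℝ) ≤ 1) |>.mp habs1 with h1 | h1
    · left
      ext j
      by_cases hj : j = L
      · subst hj; simp [EuclideanSpace.single_apply, h1]
      · simp [EuclideanSpace.single_apply, hj, hother j hj]
    · right
      ext j
      by_cases hj : j = L
      · subst hj; simp [EuclideanSpace.single_apply, h1]
      · simp [EuclideanSpace.single_apply, hj, hother j hj]

lemma span_single_top (n : ℕ) :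
    Submodule.span ℝ (Set.range fun i : Fin n => EuclideanSpace.single i (1:ℝ)) = ⊤ := by
  have hb := (EuclideanSpace.basisFun (Fin n) ℝ).toBasis.span_eq
  have hco : ⇑(EuclideanSpace.basisFun (Fin n) ℝ).toBasis
      = fun i : Fin n => EuclideanSpace.single i (1:ℝ) := by
    funext i
    rw [OrthonormalBasis.coe_toBasis, EuclideanSpace.basisFun_apply]
  rwa [hco] at hb

lemma coverNum_cross {n : ℕ} (hn : 2 ≤ n) {x : ℝ} (hx : 1 < x) :
    coverNum (crossBody n x) = 2 := by
  classical
  have hLlt : n - 1 < n := by omega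
  set L : Fin n := ⟨n - 1, hLlt⟩ with hLdef
  set Z : Fin n := ⟨0, by omega⟩ with hZdef
  have hZL : Z ≠ L := by
    intro h
    have := congrArg Fin.val h
    simp [hZdef, hLdef] at this
    omega
  set e : Euc n := EuclideanSpace.single L (1:ℝ) with hedef
  set φ : Euc n →ₗ[ℝ] ℝ := EuclideanSpace.projₗ L with hφdef
  have hφ : ∀ p : Euc n, φ p = p L := fun p => rfl
  set H1 : Submodule ℝ (Euc n) := LinearMap.ker φ with hH1def
  set H2 : Submodule ℝ (Euc n) := Submodule.span ℝ {e} with hH2def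
  have heZ : e Z = 0 := by
    simp [hedef, EuclideanSpace.single_apply, hZL]
  have heL : e L = 1 := by simp [hedef, EuclideanSpace.single_apply]
  have hZ1 : EuclideanSpace.single Z (1:ℝ) ∈ H1 := by
    rw [hH1def, LinearMap.mem_ker, hφ]
    simp [EuclideanSpace.single_apply, Ne.symm hZL]
  have hZ2 : EuclideanSpace.single Z (1:ℝ) ∉ H2 := by
    rw [hH2def, Submodule.mem_span_singleton]
    rintro ⟨a, ha⟩
    have := congrArg (fun q : Euc n => q Z) ha
    simp only [PiLp.smul_apply, smul_eq_mul, heZ, mul_zero] at this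
    rw [EuclideanSpace.single_apply] at this
    simp at this
  have hne12 : H1 ≠ H2 := fun h => hZ2 (h ▸ hZ1)
  apply IsLeast.csInf_eq
  constructor
  · -- 2 is in the set
    refine ⟨{H1, H2}, ?_, ?_, ?_⟩
    · rw [Finset.card_insert_of_notMem (by simpa using hne12), Finset.card_singleton]
    · intro H hH
      rcases Finset.mem_insert.mp hH with rfl | hH
      · rw [Ne, Submodule.eq_top_iff']
        push_neg
        refine ⟨e, ?_⟩
        rw [hH1def, LinearMap.mem_ker, hφ, heL]
        norm_num
      · rw [Finset.mem_singleton] at hH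
        subst hH
        rw [Ne, Submodule.eq_top_iff']
        push_neg
        exact ⟨EuclideanSpace.single Z (1:ℝ), hZ2⟩
    · intro p hp hlat
      rcases classify_cross hn hx hp hlat with h | h | h
      · exact ⟨H1, Finset.mem_insert_self _ _, by rw [hH1def, LinearMap.mem_ker, hφ]; exact h⟩
      · refine ⟨H2, by simp, ?_⟩
        rw [h]
        exact Submodule.mem_span_singleton_self e
      · refine ⟨H2, by simp, ?_⟩
        rw [h]
        exact Submodule.neg_mem _ (Submodule.mem_span_singleton_self e)
  · -- lower bound
    rintro k ⟨F, hcard, hnetop, hcov⟩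
    by_contra hk
    push_neg at hk
    interval_cases k
    · rw [Finset.card_eq_zero] at hcard
      subst hcard
      obtain ⟨H, hH, _⟩ := hcov _ (single_mem_cross hn hx Z) (lattice_single Z)
      exact absurd hH (Finset.notMem_empty H)
    · rw [Finset.card_eq_one] at hcard
      obtain ⟨H, rfl⟩ := hcard
      have hHtop : H = ⊤ := by
        have hle : Submodule.span ℝ
            (Set.range fun i : Fin n => EuclideanSpace.single i (1:ℝ)) ≤ H := by
          rw [Submodule.span_le]
          rintro _ ⟨i, rfl⟩
          obtain ⟨H', hH', hmem⟩ := hcov _ (single_mem_cross hn hx i) (lattice_single i)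
          rw [Finset.mem_singleton] at hH'
          subst hH'
          exact hmem
        rw [span_single_top n] at hle
        exact top_le_iff.mp hle
      exact hnetop H (Finset.mem_singleton_self H) hHtop

lemma single_injective (n : ℕ) :
    Function.Injective (fun i : Fin n => EuclideanSpace.single i (1:ℝ)) := by
  intro i j h
  by_contra hij
  have := congrArg (fun q : Euc n => q i) h
  simp only [EuclideanSpace.single_apply, if_pos rfl] at this
  rw [if_neg (fun hji : i = j => hij hji)] at this
  norm_num at this

lemma coe_range_li (n : ℕ) :
    LinearIndependent ℝ
      ((↑) : (Set.range fun i : Fin n => EuclideanSpace.single i (1:ℝ)) → Euc n) := by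
  have hb := (EuclideanSpace.basisFun (Fin n) ℝ).toBasis.linearIndependent
  have hco : ⇑(EuclideanSpace.basisFun (Fin n) ℝ).toBasis
      = fun i : Fin n => EuclideanSpace.single i (1:ℝ) := by
    funext i
    rw [OrthonormalBasis.coe_toBasis, EuclideanSpace.basisFun_apply]
  rw [hco] at hb
  exact (linearIndepOn_id_range_iff (single_injective n)).mpr hb

lemma maxGenPos_cross {n : ℕ} (hn : 2 ≤ n) {x : ℝ} (hx : 1 < x) :
    maxGenPos (crossBody n x) = n := by
  classical
  have hLlt : n - 1 < n := by omega
  set L : Fin n := ⟨n - 1, hLlt⟩ with hLdef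
  set e : Euc n := EuclideanSpace.single L (1:ℝ) with hedef
  have heL : e L = 1 := by simp [hedef, EuclideanSpace.single_apply]
  have hene : e ≠ -e := by
    intro h
    have := congrArg (fun q : Euc n => q L) h
    simp only [PiLp.neg_apply, heL] at this
    norm_num at this
  set φ : Euc n →ₗ[ℝ] ℝ := EuclideanSpace.projₗ L with hφdef
  have hφ : ∀ p : Euc n, φ p = p L := fun p => rfl
  have hkerrank : Module.finrank ℝ (LinearMap.ker φ) = n - 1 := by
    have hr : LinearMap.range φ = ⊤ := by
      rw [LinearMap.range_eq_top]
      intro c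
      refine ⟨c • e, ?_⟩
      rw [hφ]
      simp [heL]
    have := LinearMap.finrank_range_add_finrank_ker φ
    rw [hr, finrank_top] at this
    simp only [finrank_euclideanSpace_fin, Module.finrank_self] at this
    omega
  -- a finset of n lattice points of C in a proper subspace is linearly dependent
  have hker_dep : ∀ T : Finset (Euc n), T.card = n → (∀ t ∈ T, t L = 0) →
      ¬ LinearIndependent ℝ (fun v : (T : Set (Euc n)) => (v : Euc n)) := by
    intro T hTcard hT0 hli
    have hmem : ∀ v : (T : Set (Euc n)), (v : Euc n) ∈ LinearMap.ker φ := by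
      rintro ⟨v, hv⟩
      rw [LinearMap.mem_ker, hφ]
      exact hT0 v (Finset.mem_coe.mp hv)
    have hli' : LinearIndependent ℝ
        (fun t : (T : Set (Euc n)) => (⟨(t : Euc n), hmem t⟩ : LinearMap.ker φ)) := by
      apply LinearIndependent.of_comp (LinearMap.ker φ).subtype
      exact hli
    have hcard := hli'.fintype_card_le_finrank
    have hTc : Fintype.card (T : Set (Euc n)) = T.card := Fintype.card_coe T
    rw [hTc, hTcard, hkerrank] at hcard
    omega
  apply IsGreatest.csSup_eq
  constructor
  · -- n is attained
    refine ⟨Finset.image (fun i : Fin n => EuclideanSpace.single i (1:ℝ)) Finset.univ,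
      ?_, ?_, ?_, ?_⟩
    · rw [Finset.card_image_of_injective _ (single_injective n), Finset.card_univ,
        Fintype.card_fin]
    · intro p hp
      simp only [Finset.coe_image, Finset.coe_univ, Set.image_univ, Set.mem_range] at hp
      obtain ⟨i, rfl⟩ := hp
      exact single_mem_cross hn hx i
    · intro p hp
      simp only [Finset.mem_image, Finset.mem_univ, true_and] at hp
      obtain ⟨i, _, rfl⟩ := hp
      exact lattice_single i
    · intro T hT hTcard
      have hScard : (Finset.image (fun i : Fin n => EuclideanSpace.single i (1:ℝ))
          Finset.univ).card = n := by
        rw [Finset.card_image_of_injective _ (single_injective n), Finset.card_univ,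
          Fintype.card_fin]
      have hTeq : T = Finset.image (fun i : Fin n => EuclideanSpace.single i (1:ℝ))
          Finset.univ := Finset.eq_of_subset_of_card_le hT (by omega)
      subst hTeq
      have hrange : (↑(Finset.image (fun i : Fin n => EuclideanSpace.single i (1:ℝ))
          Finset.univ) : Set (Euc n))
          = Set.range fun i : Fin n => EuclideanSpace.single i (1:ℝ) := by
        simp
      exact hrange ▸ coe_range_li n
  · -- upper bound
    rintro k ⟨S, hScard, hSC, hSlat, hSgen⟩
    by_contra hk
    push_neg at hk
    have hk' : n + 1 ≤ k := hk
    have hclass : ∀ p ∈ S, p L = 0 ∨ p = e ∨ p = -e := by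
      intro p hp
      exact classify_cross hn hx (hSC hp) (hSlat p hp)
    by_cases hboth : e ∈ S ∧ -e ∈ S
    · -- both poles present: contradiction with general position
      obtain ⟨heS, hneS⟩ := hboth
      have hsub : ({e, -e} : Finset (Euc n)) ⊆ S := by
        intro t ht
        rcases Finset.mem_insert.mp ht with rfl | ht
        · exact heS
        · rw [Finset.mem_singleton] at ht; subst ht; exact hneS
      have h2 : ({e, -e} : Finset (Euc n)).card ≤ 2 :=
        le_trans (Finset.card_insert_le _ _) (by simp)
      obtain ⟨T, hT1, hT2, hTcard⟩ := Finset.exists_subsuperset_card_eq hsub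
        (h2.trans hn) (by omega)
      have hli := hSgen T hT2 hTcard
      have heT : e ∈ (T : Set (Euc n)) := Finset.mem_coe.mpr (hT1 (by simp))
      have hneT : -e ∈ (T : Set (Euc n)) := Finset.mem_coe.mpr (hT1 (by simp))
      set g : Fin 2 → (T : Set (Euc n)) := ![⟨e, heT⟩, ⟨-e, hneT⟩] with hg
      have hginj : Function.Injective g := by
        intro a b hab
        fin_cases a <;> fin_cases b
        · rfl
        · exfalso; apply hene
          simpa [hg, Subtype.ext_iff] using hab
        · exfalso; apply hene
          simpa [hg, Subtype.ext_iff] using hab.symm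
        · rfl
      have hli2 := hli.comp g hginj
      have hcomp : ((fun v : (T : Set (Euc n)) => (v : Euc n)) ∘ g) = ![e, -e] := by
        funext a
        fin_cases a <;> rfl
      rw [hcomp] at hli2
      obtain ⟨-, h2⟩ := linearIndependent_fin2.mp hli2
      apply h2 (-1)
      show (-1 : ℝ) • (![e, -e] 1) = ![e, -e] 0
      simp
    · -- at most one pole: n points with last coordinate 0
      have hSnecard : (S.filter (fun p : Euc n => ¬ p L = 0)).card ≤ 1 := by
        rw [Finset.card_le_one]
        intro a ha b hb
        rw [Finset.mem_filter] at ha hb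
        have ha' := hclass a ha.1
        have hb' := hclass b hb.1
        rcases ha' with h | h | h
        · exact absurd h ha.2
        all_goals rcases hb' with h' | h' | h'
        · exact absurd h' hb.2
        · rw [h, h']
        · exfalso; exact hboth ⟨h ▸ ha.1, h' ▸ hb.1⟩
        · exact absurd h' hb.2
        · exfalso; exact hboth ⟨h' ▸ hb.1, h ▸ ha.1⟩
        · rw [h, h']
      have hsplit : (S.filter (fun p : Euc n => p L = 0)).card
          + (S.filter (fun p : Euc n => ¬ p L = 0)).card = S.card :=
        Finset.card_filter_add_card_filter_not (fun p : Euc n => p L = 0)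
      have hS0card : n ≤ (S.filter (fun p : Euc n => p L = 0)).card := by
        have h2 : S.card ≤ (S.filter (fun p : Euc n => p L = 0)).card + 1 := by
          rw [← hsplit]
          exact Nat.add_le_add_left hSnecard _
        have h3 : n + 1 ≤ (S.filter (fun p : Euc n => p L = 0)).card + 1 :=
          le_trans (by rw [hScard]; exact hk') h2
        exact Nat.le_of_succ_le_succ h3
      obtain ⟨T, hTsub, hTcard⟩ := Finset.exists_subset_card_eq hS0card
      have hT0 : ∀ t ∈ T, t L = 0 := by
        intro t ht
        have := hTsub ht
        rw [Finset.mem_filter] at this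
        exact this.2
      exact hker_dep T hTcard hT0
        (hSgen T (hTsub.trans (Finset.filter_subset _ _)) hTcard)

/-- For `x > 1`, the cross-polytope
`C'_x = conv({±x·e_i : 1 ≤ i < n} ∪ {±e_n})` satisfies `g(C'_x) = 2` and `h(C'_x) = n`. -/
theorem cross_coverNum_and_genPos (n : ℕ) (hn : 2 ≤ n) (x : ℝ) (hx : 1 < x) :
    coverNum (crossBody n x) = 2 ∧ maxGenPos (crossBody n x) = n :=
  ⟨coverNum_cross hn hx, maxGenPos_cross hn hx⟩
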